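/- For every x ∈ ℝ^c with 𝟙ᵀx = 0 and every t ∈ ℝ, one has U_N(t) · (x, 0) = e^{iαt} · ( U_M(t) · x , 0 ). -/

import Mathlib

open Matrix

noncomputable def U {ι : Type*} [Fintype ι] [DecidableEq ι]
    (R : Matrix ι ι ℝ) (t : ℝ) : Matrix ι ι ℂ :=
  NormedSpace.exp ((Complex.I * (t : ℂ)) • R.map (Complex.ofReal ·))

section aux

variable {c m : ℕ}

/-- `Sum.elim · 0` as a linear map. -/
noncomputable def Jmap (c m : ℕ) : (Fin c → ℂ) →L[ℂ] (Fin c ⊕ Fin m → ℂ) :=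
  LinearMap.toContinuousLinearMap
    { toFun := fun y => Sum.elim y 0
      map_add' := by
        intro y z; funext i; cases i <;> simp
      map_smul' := by
        intro a y; funext i; cases i <;> simp }

/-- `· *ᵥ v` as a continuous linear map. -/
noncomputable def Lmap {κ : Type*} [Fintype κ] (v : κ → ℂ) :
    Matrix κ κ ℂ →L[ℂ] (κ → ℂ) :=
  LinearMap.toContinuousLinearMap
    { toFun := fun X => X *ᵥ v
      map_add' := fun P Q => Matrix.add_mulVec P Q v
      map_smul' := fun a P => Matrix.smul_mulVec a P v }

theorem key (A : Matrix (Fin c) (Fin c) ℂ)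
    (Nc : Matrix (Fin c ⊕ Fin m) (Fin c ⊕ Fin m) ℂ)
    (hstep : ∀ y : Fin c → ℂ, ∑ i, y i = 0 →
      Nc *ᵥ Sum.elim y 0 = Sum.elim (A *ᵥ y) 0)
    (hsum : ∀ y : Fin c → ℂ, ∑ i, y i = 0 → ∑ i, (A *ᵥ y) i = 0)
    (x : Fin c → ℂ) (hx : ∑ i, x i = 0) :
    NormedSpace.exp Nc *ᵥ Sum.elim x 0 =
      Sum.elim (NormedSpace.exp A *ᵥ x) 0 := by
  have hsums : ∀ n : ℕ, ∑ i, ((A ^ n) *ᵥ x) i = 0 := by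
    intro n
    induction n with
    | zero => simpa using hx
    | succ n ih =>
        have : A ^ (n + 1) *ᵥ x = A *ᵥ (A ^ n *ᵥ x) := by
          rw [Matrix.mulVec_mulVec, pow_succ']
        rw [this]
        exact hsum _ ih
  have hpow : ∀ n : ℕ, (Nc ^ n) *ᵥ Sum.elim x 0 = Sum.elim ((A ^ n) *ᵥ x) 0 := by
    intro n
    induction n with
    | zero => simp
    | succ n ih =>
        have h1 : Nc ^ (n + 1) *ᵥ Sum.elim x 0 = Nc *ᵥ (Nc ^ n *ᵥ Sum.elim x 0) := by
          rw [Matrix.mulVec_mulVec, pow_succ']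
        have h2 : A ^ (n + 1) *ᵥ x = A *ᵥ (A ^ n *ᵥ x) := by
          rw [Matrix.mulVec_mulVec, pow_succ']
        rw [h1, ih, h2]
        exact hstep _ (hsums n)
  letI : SeminormedRing (Matrix (Fin c ⊕ Fin m) (Fin c ⊕ Fin m) ℂ) :=
    Matrix.linftyOpSemiNormedRing
  letI : NormedRing (Matrix (Fin c ⊕ Fin m) (Fin c ⊕ Fin m) ℂ) :=
    Matrix.linftyOpNormedRing
  letI : NormedAlgebra ℂ (Matrix (Fin c ⊕ Fin m) (Fin c ⊕ Fin m) ℂ) :=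
    Matrix.linftyOpNormedAlgebra
  letI : SeminormedRing (Matrix (Fin c) (Fin c) ℂ) := Matrix.linftyOpSemiNormedRing
  letI : NormedRing (Matrix (Fin c) (Fin c) ℂ) := Matrix.linftyOpNormedRing
  letI : NormedAlgebra ℂ (Matrix (Fin c) (Fin c) ℂ) := Matrix.linftyOpNormedAlgebra
  have hS1 : Summable fun n : ℕ => ((n.factorial : ℂ))⁻¹ • Nc ^ n :=
    NormedSpace.expSeries_summable' (𝕂 := ℂ) Nc
  have hS2 : Summable fun n : ℕ => ((n.factorial : ℂ))⁻¹ • A ^ n :=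
    NormedSpace.expSeries_summable' (𝕂 := ℂ) A
  have lhs : NormedSpace.exp Nc *ᵥ Sum.elim x 0 =
      ∑' n : ℕ, ((n.factorial : ℂ))⁻¹ • (Nc ^ n *ᵥ Sum.elim x 0) := by
    have := (Lmap (Sum.elim x (0 : Fin m → ℂ))).map_tsum hS1
    rw [NormedSpace.exp_eq_tsum ℂ]
    simpa [Lmap] using this
  have rhs : Sum.elim (NormedSpace.exp A *ᵥ x) (0 : Fin m → ℂ) =
      ∑' n : ℕ, ((n.factorial : ℂ))⁻¹ • Sum.elim (A ^ n *ᵥ x) (0 : Fin m → ℂ) := by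
    have := ((Jmap c m).comp (Lmap x)).map_tsum hS2
    rw [NormedSpace.exp_eq_tsum ℂ]
    simpa [Lmap, Jmap] using this
  rw [lhs, rhs]
  congr 1
  funext n
  rw [hpow n]

end aux

theorem stmt1 (c m : ℕ) (hc : 1 ≤ c)
    (M : Matrix (Fin c) (Fin c) ℝ) (hM : M.IsSymm)
    (μ α : ℝ) (hμ : M *ᵥ (fun _ => (1 : ℝ)) = μ • fun _ => (1 : ℝ))
    (w : Fin m → ℝ)
    (B : Matrix (Fin c) (Fin m) ℝ) (hB : ∀ i j, B i j = w j)
    (D : Matrix (Fin m) (Fin m) ℝ) (hD : D.IsSymm)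
    (N : Matrix (Fin c ⊕ Fin m) (Fin c ⊕ Fin m) ℝ)
    (hN : N = Matrix.fromBlocks (α • (1 : Matrix (Fin c) (Fin c) ℝ) + M) B Bᵀ D)
    (x : Fin c → ℝ) (hx : ∑ i, x i = 0) :
    ∀ t : ℝ,
      U N t *ᵥ Sum.elim (fun i => (x i : ℂ)) 0 =
        Complex.exp (Complex.I * α * t) • Sum.elim (U M t *ᵥ fun i => (x i : ℂ)) 0 := by
  intro t
  set s : ℂ := Complex.I * t with hs
  set Mc : Matrix (Fin c) (Fin c) ℂ := M.map (Complex.ofReal ·) with hMc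
  set Ac : Matrix (Fin c) (Fin c) ℂ := (α : ℂ) • 1 + Mc with hAc
  -- column sums of M are μ
  have hcol : ∀ j, ∑ i, M i j = μ := by
    intro j
    have := congrFun hμ j
    simp only [Matrix.mulVec, dotProduct, mul_one, Pi.smul_apply, smul_eq_mul] at this
    calc ∑ i, M i j = ∑ i, M j i := by
          refine Finset.sum_congr rfl fun i _ => ?_
          rw [← hM.apply]
        _ = μ := by simpa using this
  -- the complex N
  have hNmap : N.map (Complex.ofReal ·) =
      Matrix.fromBlocks Ac (B.map (Complex.ofReal ·)) ((B.map (Complex.ofReal ·))ᵀ)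
        (D.map (Complex.ofReal ·)) := by
    have h11 : ((α • (1 : Matrix (Fin c) (Fin c) ℝ) + M).map (Complex.ofReal ·)) = Ac := by
      funext i j
      by_cases h : i = j <;>
        simp [h, hAc, hMc, Matrix.map_apply, Matrix.one_apply]
    rw [hN, Matrix.fromBlocks_map, Matrix.transpose_map, h11]
  have hstep : ∀ y : Fin c → ℂ, ∑ i, y i = 0 →
      (s • N.map (Complex.ofReal ·)) *ᵥ Sum.elim y 0 = Sum.elim ((s • Ac) *ᵥ y) 0 := by
    intro y hy
    rw [Matrix.smul_mulVec, Matrix.smul_mulVec, hNmap,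
      Matrix.fromBlocks_mulVec]
    simp only [Sum.elim_comp_inl, Sum.elim_comp_inr]
    have hBt : (B.map (Complex.ofReal ·))ᵀ *ᵥ y = 0 := by
      funext j
      simp only [Matrix.mulVec, dotProduct, Matrix.transpose_apply, Matrix.map_apply,
        Pi.zero_apply, hB]
      rw [← Finset.mul_sum, hy, mul_zero]
    rw [hBt]
    funext i
    cases i <;> simp
  have hsum : ∀ y : Fin c → ℂ, ∑ i, y i = 0 → ∑ i, ((s • Ac) *ᵥ y) i = 0 := by
    intro y hy
    rw [Matrix.smul_mulVec]
    simp only [Pi.smul_apply, smul_eq_mul, ← Finset.mul_sum]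
    have : ∑ i, (Ac *ᵥ y) i = 0 := by
      have hc2 : ∀ j, ∑ i, Ac i j = (α : ℂ) + (μ : ℂ) := by
        intro j
        simp only [hAc, Matrix.add_apply, Matrix.smul_apply, Matrix.one_apply, smul_eq_mul,
          mul_ite, mul_one, mul_zero, Finset.sum_add_distrib]
        rw [Finset.sum_ite_eq' Finset.univ j (fun _ => (α : ℂ))]
        simp only [Finset.mem_univ, if_true]
        congr 1
        have : ∑ i, Mc i j = ((∑ i, M i j : ℝ) : ℂ) := by
          simp [hMc, Matrix.map_apply]
        rw [this, hcol j]
      calc ∑ i, (Ac *ᵥ y) i = ∑ i, ∑ j, Ac i j * y j := rfl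
        _ = ∑ j, ∑ i, Ac i j * y j := Finset.sum_comm
        _ = ∑ j, (∑ i, Ac i j) * y j := by
            exact Finset.sum_congr rfl fun j _ => (Finset.sum_mul _ _ _).symm
        _ = ∑ j, ((α : ℂ) + μ) * y j :=
            Finset.sum_congr rfl fun j _ => by rw [hc2 j]
        _ = ((α : ℂ) + μ) * ∑ j, y j := (Finset.mul_sum _ _ _).symm
        _ = 0 := by rw [hy, mul_zero]
    rw [this, mul_zero]
  have hkey := key (s • Ac) (s • N.map (Complex.ofReal ·)) hstep hsum
    (fun i => (x i : ℂ)) (by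
      have : ((∑ i, x i : ℝ) : ℂ) = 0 := by rw [hx]; simp
      simpa using this)
  have hUN : U N t = NormedSpace.exp (s • N.map (Complex.ofReal ·)) := rfl
  rw [hUN, hkey]
  -- now split exp (s • Ac)
  have hsplit : s • Ac = (s * α) • (1 : Matrix (Fin c) (Fin c) ℂ) + s • Mc := by
    rw [hAc, smul_add, smul_smul]
  have hcomm : Commute ((s * α) • (1 : Matrix (Fin c) (Fin c) ℂ)) (s • Mc) :=
    (Commute.one_left _).smul_left _ |>.smul_right _
  have hexp : NormedSpace.exp (s • Ac) =
      Complex.exp (s * α) • NormedSpace.exp (s • Mc) := by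
    rw [hsplit, Matrix.exp_add_of_commute _ _ hcomm]
    have h1 : NormedSpace.exp ((s * α) • (1 : Matrix (Fin c) (Fin c) ℂ)) =
        Complex.exp (s * α) • (1 : Matrix (Fin c) (Fin c) ℂ) := by
      rw [Matrix.smul_one_eq_diagonal, Matrix.exp_diagonal, Pi.exp_def,
        Matrix.smul_one_eq_diagonal]
      congr 1
      funext i
      rw [← Complex.exp_eq_exp_ℂ]
    rw [h1, smul_mul_assoc, one_mul]
  rw [hexp, Matrix.smul_mulVec]
  have : Complex.exp (Complex.I * α * t) = Complex.exp (s * α) := by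
    rw [hs]; ring_nf
  rw [this]
  funext i
  cases i <;> simp [U, hMc, hs]
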